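/- For the path graph P_n, the closeness centrality satisfies (4/n)·√((n-1)/(n+1))·arctan(√((n-1)/(n+1))) ≤ C̄_C(P_n) ≤ (π/n)·√((n-1)/(n+1)) + (n-1)/(n·⌊n/2⌋·⌈n/2⌉). -/

import Mathlib

open Finset SimpleGraph

lemma pg_connected {n : ℕ} (i : Fin n) : (pathGraph n).Connected := by
  obtain ⟨m, rfl⟩ : ∃ m, n = m + 1 := ⟨n - 1, by have := i.pos; omega⟩
  exact pathGraph_connected m

lemma pg_dist_le (n : ℕ) (i j : Fin n) (h : i.val ≤ j.val) :
    (pathGraph n).dist i j ≤ j.val - i.val := by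
  obtain ⟨d, hd⟩ : ∃ d, j.val - i.val = d := ⟨_, rfl⟩
  induction d generalizing j with
  | zero =>
    have : i = j := Fin.ext (by omega)
    subst this; simp
  | succ d ih =>
    have hj1 : 1 ≤ j.val := by omega
    set j' : Fin n := ⟨j.val - 1, by omega⟩ with hj'
    have hadj : (pathGraph n).Adj j' j := by
      rw [pathGraph_adj]; left; show j.val - 1 + 1 = j.val; omega
    have h1 : (pathGraph n).dist j' j = 1 := dist_eq_one_iff_adj.mpr hadj
    have h2 : (pathGraph n).dist i j' ≤ d := by
      have := ih j' (by show i.val ≤ j.val - 1; omega) (by show j.val - 1 - i.val = d; omega)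
      simpa [hj'] using this.trans (by show j.val - 1 - i.val ≤ d; omega)
    calc (pathGraph n).dist i j ≤ (pathGraph n).dist i j' + (pathGraph n).dist j' j :=
          (pg_connected i).dist_triangle
      _ ≤ d + 1 := by omega
      _ ≤ ↑j - ↑i := by omega

lemma pg_walk_ge {n : ℕ} {i j : Fin n} (p : (pathGraph n).Walk i j) :
    Nat.dist i.val j.val ≤ p.length := by
  induction p with
  | nil => simp [Nat.dist_self]
  | @cons u v w h p ih =>
    have h1 : Nat.dist u.val v.val = 1 := by
      rw [pathGraph_adj] at h
      rcases h with h | h <;> simp [Nat.dist] <;> omega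
    calc Nat.dist u.val w.val ≤ Nat.dist u.val v.val + Nat.dist v.val w.val :=
          Nat.dist.triangle_inequality _ _ _
      _ ≤ 1 + p.length := by omega
      _ ≤ (Walk.cons h p).length := by simp [Walk.length_cons]; omega
    
lemma pg_dist (n : ℕ) (i j : Fin n) :
    (pathGraph n).dist i j = Nat.dist i.val j.val := by
  have hle : (pathGraph n).dist i j ≤ Nat.dist i.val j.val := by
    rcases le_total i.val j.val with h | h
    · simpa [Nat.dist_eq_sub_of_le h] using pg_dist_le n i j h
    · rw [dist_comm, Nat.dist_comm]
      simpa [Nat.dist_eq_sub_of_le h] using pg_dist_le n j i h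
  have hge : Nat.dist i.val j.val ≤ (pathGraph n).dist i j := by
    obtain ⟨p, hp⟩ := ((pg_connected i).1 i j).exists_walk_length_eq_dist
    rw [← hp]; exact pg_walk_ge p
  omega

lemma sum_natDist (n i : ℕ) (hi : i < n) :
    2 * ∑ j ∈ range n, Nat.dist i j = i * (i+1) + (n-1-i) * (n-i) := by
  have hsplit : ∑ j ∈ range n, Nat.dist i j
      = ∑ j ∈ range (i+1), Nat.dist i j + ∑ j ∈ Ico (i+1) n, Nat.dist i j := by
    rw [Finset.sum_range_add_sum_Ico _ (by omega)]
  have h1 : ∑ j ∈ range (i+1), Nat.dist i j = ∑ j ∈ range (i+1), j := by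
    rw [← Finset.sum_range_reflect]
    refine Finset.sum_congr rfl fun j hj => ?_
    simp only [Finset.mem_range] at hj
    simp [Nat.dist]; omega
  have h2 : ∑ j ∈ Ico (i+1) n, Nat.dist i j = ∑ t ∈ range (n-(i+1)), (t+1) := by
    rw [Finset.sum_Ico_eq_sum_range]
    refine Finset.sum_congr rfl fun t ht => ?_
    simp [Nat.dist]; omega
  have g1 : (∑ j ∈ range (i+1), j) * 2 = (i+1) * i := Finset.sum_range_id_mul_two (i+1)
  have g2 : (∑ t ∈ range (n-(i+1)), t) * 2 = (n-(i+1)) * (n-(i+1)-1) :=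
    Finset.sum_range_id_mul_two _
  rw [hsplit, h1, h2]
  have h3 : ∑ t ∈ range (n-(i+1)), (t+1) = (∑ t ∈ range (n-(i+1)), t) + (n-(i+1)) := by
    rw [Finset.sum_add_distrib]; simp
  rw [h3]
  obtain ⟨m, hm⟩ : ∃ m, n - (i+1) = m := ⟨_, rfl⟩
  rw [hm] at g2 ⊢
  have hm1 : n - 1 - i = m := by omega
  have hm2 : n - i = m + 1 := by omega
  rw [hm1, hm2]
  have mul_id : m * (m+1) = m * (m-1) + 2*m := by
    cases m with
    | zero => simp
    | succ k => simp [Nat.succ_sub_one]; ring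
  ring_nf at g1 g2 mul_id ⊢
  linarith [g1, g2, mul_id]

lemma sum_natDist_real (n i : ℕ) (hi : i < n) :
    ∑ j ∈ range n, (Nat.dist i j : ℝ)
      = ((2*(i:ℝ) - ((n:ℝ)-1))^2 + ((n:ℝ)^2 - 1)) / 4 := by
  have h := sum_natDist n i hi
  have hcast : (2:ℝ) * ∑ j ∈ range n, (Nat.dist i j : ℝ)
      = (i:ℝ) * ((i:ℝ)+1) + ((n:ℝ)-1-(i:ℝ)) * ((n:ℝ)-(i:ℝ)) := by
    have := congrArg (fun x : ℕ => (x : ℝ)) h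
    push_cast [Nat.cast_sub (by omega : i ≤ n - 1), Nat.cast_sub (by omega : 1 ≤ n),
      Nat.cast_sub hi.le] at this
    linarith [this]
  linear_combination hcast / 2

noncomputable def fpg (n : ℕ) (x : ℝ) : ℝ :=
  4 * ((n:ℝ) - 1) / ((2*x - ((n:ℝ)-1))^2 + ((n:ℝ)^2 - 1))

section basic
variable {n : ℕ} (hn : 2 ≤ n)
include hn

lemma c_pos : (0:ℝ) < (n:ℝ)^2 - 1 := by
  have : (2:ℝ) ≤ n := by exact_mod_cast hn
  nlinarith

lemma denom_pos (x : ℝ) : (0:ℝ) < (2*x - ((n:ℝ)-1))^2 + ((n:ℝ)^2 - 1) := by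
  have := c_pos (n := n) hn
  nlinarith [sq_nonneg (2*x - ((n:ℝ)-1))]

lemma fpg_nonneg (x : ℝ) : 0 ≤ fpg n x := by
  have h1 : (1:ℝ) ≤ n := by exact_mod_cast hn.trans' (by norm_num)
  exact div_nonneg (by linarith) (denom_pos hn x).le

lemma fpg_le (x : ℝ) : fpg n x ≤ 4 * ((n:ℝ)-1) / ((n:ℝ)^2 - 1) := by
  have h1 : (1:ℝ) ≤ n := by exact_mod_cast hn.trans' (by norm_num)
  apply div_le_div_of_nonneg_left (by linarith) (c_pos hn)
  nlinarith [sq_nonneg (2*x - ((n:ℝ)-1))]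

lemma fpg_cont : Continuous (fpg n) := by
  apply Continuous.div (by continuity) (by continuity)
  intro x; exact (denom_pos hn x).ne'

lemma fpg_intble (p q : ℝ) : IntervalIntegrable (fpg n) MeasureTheory.volume p q :=
  (fpg_cont hn).intervalIntegrable p q

lemma fpg_mono : MonotoneOn (fpg n) (Set.Iic (((n:ℝ)-1)/2)) := by
  intro x hx y hy hxy
  simp only [Set.mem_Iic] at hx hy
  apply div_le_div_of_nonneg_left ?_ (denom_pos hn y) ?_
  · have h1 : (1:ℝ) ≤ n := by exact_mod_cast hn.trans' (by norm_num)
    linarith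
  · nlinarith

lemma fpg_anti : AntitoneOn (fpg n) (Set.Ici (((n:ℝ)-1)/2)) := by
  intro x hx y hy hxy
  simp only [Set.mem_Ici] at hx hy
  apply div_le_div_of_nonneg_left ?_ (denom_pos hn x) ?_
  · have h1 : (1:ℝ) ≤ n := by exact_mod_cast hn.trans' (by norm_num)
    linarith
  · nlinarith

lemma fpg_hasDeriv (x : ℝ) :
    HasDerivAt (fun y => 2 * (((n:ℝ)-1) / Real.sqrt ((n:ℝ)^2-1)) *
      Real.arctan ((2*y - ((n:ℝ)-1)) / Real.sqrt ((n:ℝ)^2-1))) (fpg n x) x := by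
  set a : ℝ := (n:ℝ) - 1
  set c : ℝ := (n:ℝ)^2 - 1
  have hc : 0 < c := c_pos hn
  set t : ℝ := Real.sqrt c
  have ht : 0 < t := Real.sqrt_pos.mpr hc
  have ht2 : t^2 = c := Real.sq_sqrt hc.le
  have h1 : HasDerivAt (fun y : ℝ => (2*y - a)/t) (2/t) x := by
    have := ((hasDerivAt_id x).const_mul (2:ℝ)).sub_const a
    simpa using this.div_const t
  have h2 := (Real.hasDerivAt_arctan ((2*x - a)/t)).comp x h1
  have h3 := h2.const_mul (2 * (a/t))
  refine h3.congr_deriv (Eq.symm ?_)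
  have hd : 0 < (2*x - a)^2 + c := denom_pos hn x
  have hu : 0 < 1 + ((2*x-a)/t)^2 := by positivity
  have e1 : t^2 * (1 + ((2*x-a)/t)^2) = (2*x-a)^2 + c := by
    have htne : t^2 ≠ 0 := by positivity
    rw [div_pow, mul_add, mul_div_assoc', mul_div_cancel_left₀ _ htne, mul_one, ht2]; ring
  show fpg n x = 2 * (a/t) * (1 / (1 + ((2*x-a)/t)^2) * (2/t))
  rw [fpg]
  show 4 * a / ((2*x - a)^2 + c) = _
  rw [← e1]
  field_simp
  ring


lemma fpg_sum_ge :
    (∫ x in (0:ℝ)..((n:ℝ)-1), fpg n x) ≤ ∑ k ∈ range n, fpg n (k:ℝ) := by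
  have h1 : (1:ℝ) ≤ n := by exact_mod_cast hn.trans' (by norm_num)
  set N := n - 1 with hN
  set M := (n+1)/2 - 1 with hM
  set m := n/2 with hm
  have hNr : ((N:ℕ):ℝ) = (n:ℝ) - 1 := by
    rw [hN]; push_cast [Nat.cast_sub (by omega : 1 ≤ n)]; ring
  have hMle : (M:ℝ) ≤ ((n:ℝ)-1)/2 := by
    have : 2*M ≤ n - 1 := by omega
    have : 2*(M:ℝ) ≤ (n:ℝ) - 1 := by
      calc 2*(M:ℝ) = ((2*M : ℕ) : ℝ) := by push_cast; ring
        _ ≤ ((n-1 : ℕ):ℝ) := by exact_mod_cast this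
        _ = (n:ℝ) - 1 := by push_cast [Nat.cast_sub (by omega : 1 ≤ n)]; ring
    linarith
  have hmge : ((n:ℝ)-1)/2 ≤ (m:ℝ) := by
    have h : n - 1 ≤ 2*m := by omega
    have : (n:ℝ) - 1 ≤ 2*(m:ℝ) := by
      calc (n:ℝ) - 1 = ((n-1:ℕ):ℝ) := by push_cast [Nat.cast_sub (by omega : 1 ≤ n)]; ring
        _ ≤ ((2*m : ℕ):ℝ) := by exact_mod_cast h
        _ = 2*(m:ℝ) := by push_cast; ring
    linarith
  have hMm : (M:ℝ) ≤ (m:ℝ) := hMle.trans hmge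
  have hmono : MonotoneOn (fpg n) (Set.Icc ((0:ℕ):ℝ) ((M:ℕ):ℝ)) :=
    (fpg_mono hn).mono (Set.Icc_subset_Iic_self.trans (Set.Iic_subset_Iic.mpr hMle))
  have hanti : AntitoneOn (fpg n) (Set.Icc ((m:ℕ):ℝ) ((N:ℕ):ℝ)) :=
    (fpg_anti hn).mono (Set.Icc_subset_Ici_self.trans (Set.Ici_subset_Ici.mpr hmge))
  have s1 := hmono.integral_le_sum_Ico (Nat.zero_le M)
  have s2 := hanti.integral_le_sum_Ico (by omega : m ≤ N)
  -- rewrite s1's sum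
  have s1' : (∫ x in ((0:ℕ):ℝ)..((M:ℕ):ℝ), fpg n x) ≤ ∑ k ∈ Ico 1 (M+1), fpg n (k:ℝ) := by
    refine s1.trans_eq ?_
    rw [Nat.Ico_zero_eq_range]
    conv_rhs => rw [Finset.sum_Ico_eq_sum_range]
    simp only [Nat.add_sub_cancel]
    refine Finset.sum_congr rfl fun i _ => ?_
    congr 1
    push_cast; ring
  -- middle integral
  have smid : (∫ x in ((M:ℕ):ℝ)..((m:ℕ):ℝ), fpg n x)
      ≤ ((m:ℝ) - (M:ℝ)) * (4 * ((n:ℝ)-1) / ((n:ℝ)^2 - 1)) := by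
    calc (∫ x in ((M:ℕ):ℝ)..((m:ℕ):ℝ), fpg n x)
        ≤ ∫ _ in ((M:ℕ):ℝ)..((m:ℕ):ℝ), (4 * ((n:ℝ)-1) / ((n:ℝ)^2 - 1)) := by
          apply intervalIntegral.integral_mono_on hMm (fpg_intble hn _ _)
            intervalIntegrable_const (fun x _ => fpg_le hn x)
      _ = ((m:ℝ) - (M:ℝ)) * (4 * ((n:ℝ)-1) / ((n:ℝ)^2 - 1)) := by
          rw [intervalIntegral.integral_const]; simp
  -- split the integral
  have splitA : (∫ x in ((0:ℕ):ℝ)..((M:ℕ):ℝ), fpg n x) + (∫ x in ((M:ℕ):ℝ)..((m:ℕ):ℝ), fpg n x)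
      = ∫ x in ((0:ℕ):ℝ)..((m:ℕ):ℝ), fpg n x :=
    intervalIntegral.integral_add_adjacent_intervals (fpg_intble hn _ _) (fpg_intble hn _ _)
  have splitB : (∫ x in ((0:ℕ):ℝ)..((m:ℕ):ℝ), fpg n x) + (∫ x in ((m:ℕ):ℝ)..((N:ℕ):ℝ), fpg n x)
      = ∫ x in ((0:ℕ):ℝ)..((N:ℕ):ℝ), fpg n x :=
    intervalIntegral.integral_add_adjacent_intervals (fpg_intble hn _ _) (fpg_intble hn _ _)
  -- the combinatorial step
  have key : ∑ k ∈ Ico 1 (M+1), fpg n (k:ℝ) + ((m:ℝ) - (M:ℝ)) * (4 * ((n:ℝ)-1) / ((n:ℝ)^2 - 1))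
      + ∑ k ∈ Ico m N, fpg n (k:ℝ)
      ≤ ∑ k ∈ Ico 1 N, fpg n (k:ℝ) + 4 * ((n:ℝ)-1) / ((n:ℝ)^2 - 1) := by
    rcases (by omega : m = M + 1 ∨ (m = M ∧ 1 ≤ M ∧ M < N)) with hc | ⟨hc, hM1, hMN⟩
    · have e1 : ((m:ℝ) - (M:ℝ)) = 1 := by rw [hc]; push_cast; ring
      rw [e1, hc]
      have hcons := Finset.sum_Ico_consecutive (fun k : ℕ => fpg n (k:ℝ))
        (by omega : 1 ≤ M+1) (by omega : M+1 ≤ N)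
      linarith
    · have e1 : ((m:ℝ) - (M:ℝ)) = 0 := by rw [hc]; ring
      rw [e1, hc]
      rw [Finset.sum_Ico_succ_top (by omega : 1 ≤ M)]
      rw [Finset.sum_eq_sum_Ico_succ_bot hMN]
      have hcons := Finset.sum_Ico_consecutive (fun k : ℕ => fpg n (k:ℝ))
        (by omega : 1 ≤ M+1) (by omega : M+1 ≤ N)
      rw [Finset.sum_Ico_succ_top (by omega : 1 ≤ M)] at hcons
      have := fpg_le hn ((M:ℕ):ℝ)
      linarith
  -- endpoint values
  have hzero : fpg n ((0:ℕ):ℝ) = 2 / (n:ℝ) := by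
    rw [fpg]
    rw [div_eq_div_iff (denom_pos hn _).ne' (by linarith : (0:ℝ) < n).ne']
    push_cast; ring
  have hNval : fpg n ((N:ℕ):ℝ) = 2 / (n:ℝ) := by
    rw [fpg, hNr]
    rw [div_eq_div_iff (denom_pos hn _).ne' (by linarith : (0:ℝ) < n).ne']
    ring
  have hcle : 4 * ((n:ℝ)-1) / ((n:ℝ)^2 - 1) ≤ 4 / (n:ℝ) := by
    rw [div_le_div_iff₀ (c_pos hn) (by linarith : (0:ℝ) < n)]
    nlinarith
  -- final sum structure
  have hsum : ∑ k ∈ range n, fpg n (k:ℝ)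
      = fpg n ((0:ℕ):ℝ) + ∑ k ∈ Ico 1 N, fpg n (k:ℝ) + fpg n ((N:ℕ):ℝ) := by
    rw [← Nat.Ico_zero_eq_range]
    rw [Finset.sum_eq_sum_Ico_succ_bot (by omega : 0 < n)]
    have hn' : n = N + 1 := by omega
    rw [hn', Finset.sum_Ico_succ_top (by omega : 1 ≤ N)]
    ring
  have hint0 : (∫ x in (0:ℝ)..((n:ℝ)-1), fpg n x) = ∫ x in ((0:ℕ):ℝ)..((N:ℕ):ℝ), fpg n x := by
    rw [hNr]; norm_num
  rw [hint0, ← splitB, ← splitA, hsum]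
  have c1 : (∫ (x : ℝ) in ((0:ℕ):ℝ)..((M:ℕ):ℝ), fpg n x) + (∫ (x : ℝ) in ((M:ℕ):ℝ)..((m:ℕ):ℝ), fpg n x) + (∫ (x : ℝ) in ((m:ℕ):ℝ)..((N:ℕ):ℝ), fpg n x)
      ≤ ∑ k ∈ Ico 1 (M+1), fpg n (k:ℝ) + ((m:ℝ) - (M:ℝ)) * (4 * ((n:ℝ)-1) / ((n:ℝ)^2 - 1)) + ∑ k ∈ Ico m N, fpg n (k:ℝ) := by
    exact add_le_add (add_le_add s1' smid) s2
  have c2 := c1.trans key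
  calc ((∫ (x : ℝ) in ((0:ℕ):ℝ)..((M:ℕ):ℝ), fpg n x) + ∫ (x : ℝ) in ((M:ℕ):ℝ)..((m:ℕ):ℝ), fpg n x) + ∫ (x : ℝ) in ((m:ℕ):ℝ)..((N:ℕ):ℝ), fpg n x
      ≤ ∑ k ∈ Ico 1 N, fpg n (k:ℝ) + 4 * ((n:ℝ) - 1) / ((n:ℝ) ^ 2 - 1) := c2
    _ ≤ ∑ k ∈ Ico 1 N, fpg n (k:ℝ) + 4 / (n:ℝ) := by linarith [hcle]
    _ = 2/(n:ℝ) + ∑ k ∈ Ico 1 N, fpg n (k:ℝ) + 2/(n:ℝ) := by ring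
    _ = fpg n ((0:ℕ):ℝ) + ∑ k ∈ Ico 1 N, fpg n (k:ℝ) + fpg n ((N:ℕ):ℝ) := by rw [hzero, hNval]


lemma fpg_sum_le :
    ∑ k ∈ range n, fpg n (k:ℝ)
      ≤ (∫ x in (0:ℝ)..((n:ℝ)-1), fpg n x) + fpg n (((n/2 : ℕ)):ℝ) := by
  have h1 : (1:ℝ) ≤ n := by exact_mod_cast hn.trans' (by norm_num)
  set N := n - 1 with hN
  set M := (n+1)/2 - 1 with hM
  set m := n/2 with hm
  have hNr : ((N:ℕ):ℝ) = (n:ℝ) - 1 := by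
    rw [hN]; push_cast [Nat.cast_sub (by omega : 1 ≤ n)]; ring
  have hMle : (M:ℝ) ≤ ((n:ℝ)-1)/2 := by
    have h : 2*M ≤ n - 1 := by omega
    have : 2*(M:ℝ) ≤ (n:ℝ) - 1 := by
      calc 2*(M:ℝ) = ((2*M : ℕ) : ℝ) := by push_cast; ring
        _ ≤ ((n-1 : ℕ):ℝ) := by exact_mod_cast h
        _ = (n:ℝ) - 1 := by push_cast [Nat.cast_sub (by omega : 1 ≤ n)]; ring
    linarith
  have hmge : ((n:ℝ)-1)/2 ≤ (m:ℝ) := by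
    have h : n - 1 ≤ 2*m := by omega
    have : (n:ℝ) - 1 ≤ 2*(m:ℝ) := by
      calc (n:ℝ) - 1 = ((n-1:ℕ):ℝ) := by push_cast [Nat.cast_sub (by omega : 1 ≤ n)]; ring
        _ ≤ ((2*m : ℕ):ℝ) := by exact_mod_cast h
        _ = 2*(m:ℝ) := by push_cast; ring
    linarith
  have hMm : (M:ℝ) ≤ (m:ℝ) := hMle.trans hmge
  have hmono : MonotoneOn (fpg n) (Set.Icc ((0:ℕ):ℝ) ((M:ℕ):ℝ)) :=
    (fpg_mono hn).mono (Set.Icc_subset_Iic_self.trans (Set.Iic_subset_Iic.mpr hMle))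
  have hanti : AntitoneOn (fpg n) (Set.Icc ((m:ℕ):ℝ) ((N:ℕ):ℝ)) :=
    (fpg_anti hn).mono (Set.Icc_subset_Ici_self.trans (Set.Ici_subset_Ici.mpr hmge))
  have s1 := hmono.sum_le_integral_Ico (Nat.zero_le M)
  have s2 := hanti.sum_le_integral_Ico (by omega : m ≤ N)
  have s2' : ∑ k ∈ Ico (m+1) n, fpg n (k:ℝ) ≤ ∫ x in ((m:ℕ):ℝ)..((N:ℕ):ℝ), fpg n x := by
    refine le_trans (le_of_eq ?_) s2
    conv_lhs => rw [Finset.sum_Ico_eq_sum_range]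
    conv_rhs => rw [Finset.sum_Ico_eq_sum_range]
    have hnm : n - (m+1) = N - m := by omega
    rw [hnm]
    refine Finset.sum_congr rfl fun i _ => ?_
    congr 1
    push_cast; ring
  -- middle sum vs middle integral
  have smid : ∑ k ∈ Ico M (m+1), fpg n (k:ℝ)
      ≤ (∫ x in ((M:ℕ):ℝ)..((m:ℕ):ℝ), fpg n x) + fpg n ((m:ℕ):ℝ) := by
    rcases (by omega : m = M ∨ m = M + 1) with hc | hc
    · rw [hc]
      rw [Nat.Ico_succ_singleton, Finset.sum_singleton]
      rw [intervalIntegral.integral_same]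
      simp [hc]
    · have hIco : Ico M (m+1) = {M, m} := by
        rw [hc]
        ext x; simp [Finset.mem_Ico, Finset.mem_insert]; omega
      rw [hIco, Finset.sum_insert (by simp; omega), Finset.sum_singleton]
      have hfM : fpg n ((M:ℕ):ℝ) ≤ ∫ x in ((M:ℕ):ℝ)..((m:ℕ):ℝ), fpg n x := by
        have hpt : ∀ x ∈ Set.Icc ((M:ℕ):ℝ) ((m:ℕ):ℝ), fpg n ((M:ℕ):ℝ) ≤ fpg n x := by
          intro x hx
          simp only [Set.mem_Icc] at hx
          apply div_le_div_of_nonneg_left (by linarith) (denom_pos hn x)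
          have e2 : (m:ℝ) = (M:ℝ) + 1 := by rw [hc]; push_cast; ring
          have e3 : 2*(m:ℕ) = n := by omega
          have e4 : 2*(m:ℝ) = (n:ℝ) := by exact_mod_cast congrArg (fun k : ℕ => (k:ℝ)) e3
          nlinarith [hx.1, hx.2]
        calc fpg n ((M:ℕ):ℝ)
            = ∫ _ in ((M:ℕ):ℝ)..((m:ℕ):ℝ), fpg n ((M:ℕ):ℝ) := by
              rw [intervalIntegral.integral_const]
              have e2 : (m:ℝ) = (M:ℝ) + 1 := by rw [hc]; push_cast; ring
              rw [e2]; simp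
          _ ≤ ∫ x in ((M:ℕ):ℝ)..((m:ℕ):ℝ), fpg n x :=
              intervalIntegral.integral_mono_on hMm intervalIntegrable_const
                (fpg_intble hn _ _) hpt
      linarith
  -- decompose the full sum
  have hdec : ∑ k ∈ range n, fpg n (k:ℝ)
      = ∑ k ∈ Ico 0 M, fpg n (k:ℝ) + ∑ k ∈ Ico M (m+1), fpg n (k:ℝ)
        + ∑ k ∈ Ico (m+1) n, fpg n (k:ℝ) := by
    rw [Finset.sum_Ico_consecutive _ (Nat.zero_le M) (by omega : M ≤ m+1)]
    rw [Finset.sum_Ico_consecutive _ (Nat.zero_le (m+1)) (by omega : m+1 ≤ n)]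
    rw [Nat.Ico_zero_eq_range]
  have splitA : (∫ x in ((0:ℕ):ℝ)..((M:ℕ):ℝ), fpg n x) + (∫ x in ((M:ℕ):ℝ)..((m:ℕ):ℝ), fpg n x)
      = ∫ x in ((0:ℕ):ℝ)..((m:ℕ):ℝ), fpg n x :=
    intervalIntegral.integral_add_adjacent_intervals (fpg_intble hn _ _) (fpg_intble hn _ _)
  have splitB : (∫ x in ((0:ℕ):ℝ)..((m:ℕ):ℝ), fpg n x) + (∫ x in ((m:ℕ):ℝ)..((N:ℕ):ℝ), fpg n x)
      = ∫ x in ((0:ℕ):ℝ)..((N:ℕ):ℝ), fpg n x :=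
    intervalIntegral.integral_add_adjacent_intervals (fpg_intble hn _ _) (fpg_intble hn _ _)
  have hint0 : (∫ x in (0:ℝ)..((n:ℝ)-1), fpg n x) = ∫ x in ((0:ℕ):ℝ)..((N:ℕ):ℝ), fpg n x := by
    rw [hNr]; norm_num
  rw [hint0, ← splitB, ← splitA, hdec]
  linarith [s1, s2', smid]

lemma fpg_integral (p q : ℝ) :
    ∫ x in p..q, fpg n x
      = 2 * (((n:ℝ)-1) / Real.sqrt ((n:ℝ)^2-1)) *
          Real.arctan ((2*q - ((n:ℝ)-1)) / Real.sqrt ((n:ℝ)^2-1))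
        - 2 * (((n:ℝ)-1) / Real.sqrt ((n:ℝ)^2-1)) *
          Real.arctan ((2*p - ((n:ℝ)-1)) / Real.sqrt ((n:ℝ)^2-1)) :=
  intervalIntegral.integral_eq_sub_of_hasDerivAt (fun x _ => fpg_hasDeriv hn x)
    (fpg_intble hn p q)

lemma sqrt_ratio_eq : Real.sqrt (((n:ℝ)-1)/((n:ℝ)+1))
    = ((n:ℝ)-1) / Real.sqrt ((n:ℝ)^2-1) := by
  have h1 : (1:ℝ) ≤ n := by exact_mod_cast hn.trans' (by norm_num)
  have h2 : ((n:ℝ)-1)/((n:ℝ)+1) = ((n:ℝ)-1)^2 / ((n:ℝ)^2-1) := by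
    rw [div_eq_div_iff (by linarith) (c_pos hn).ne']
    ring
  rw [h2, Real.sqrt_div (by positivity), Real.sqrt_sq (by linarith)]

lemma fpg_integral_total :
    ∫ x in (0:ℝ)..((n:ℝ)-1), fpg n x
      = 4 * Real.sqrt (((n:ℝ)-1)/((n:ℝ)+1)) *
          Real.arctan (Real.sqrt (((n:ℝ)-1)/((n:ℝ)+1))) := by
  rw [fpg_integral hn, sqrt_ratio_eq hn]
  have e1 : (2*((n:ℝ)-1) - ((n:ℝ)-1)) / Real.sqrt ((n:ℝ)^2-1)
      = ((n:ℝ)-1) / Real.sqrt ((n:ℝ)^2-1) := by ring_nf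
  have e2 : (2*(0:ℝ) - ((n:ℝ)-1)) / Real.sqrt ((n:ℝ)^2-1)
      = -(((n:ℝ)-1) / Real.sqrt ((n:ℝ)^2-1)) := by ring
  rw [e1, e2, Real.arctan_neg]
  ring


lemma fpg_half : fpg n (((n/2 : ℕ)):ℝ)
    = ((n:ℝ)-1) / (((n/2:ℕ):ℝ) * ((((n+1)/2:ℕ)):ℝ)) := by
  rcases Nat.even_or_odd n with ⟨k, hk⟩ | ⟨k, hk⟩
  · have e1 : n/2 = k := by omega
    have e2 : (n+1)/2 = k := by omega
    have hk1 : 1 ≤ k := by omega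
    have hk1' : (1:ℝ) ≤ (k:ℝ) := by exact_mod_cast hk1
    rw [e1, e2, fpg, hk]
    rw [div_eq_div_iff (denom_pos (by omega) _).ne' (by nlinarith : ((k:ℝ)*(k:ℝ)) ≠ 0)]
    push_cast; ring
  · have e1 : n/2 = k := by omega
    have e2 : (n+1)/2 = k+1 := by omega
    have hk1 : 1 ≤ k := by omega
    have hk1' : (1:ℝ) ≤ (k:ℝ) := by exact_mod_cast hk1
    rw [e1, e2, fpg, hk]
    have hkk : (0:ℝ) < (k:ℝ)*(((k+1:ℕ):ℝ)) := by push_cast; nlinarith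
    rw [div_eq_div_iff (denom_pos (by omega) _).ne' hkk.ne']
    push_cast; ring

lemma closeness_sum_eq :
    ∑ v : Fin n, ((n:ℝ)-1) / ∑ w : Fin n, ((SimpleGraph.pathGraph n).dist v w : ℝ)
      = ∑ k ∈ range n, fpg n (k:ℝ) := by
  have hv : ∀ v : Fin n, ∑ w : Fin n, ((SimpleGraph.pathGraph n).dist v w : ℝ)
      = ((2*(v.val:ℝ) - ((n:ℝ)-1))^2 + ((n:ℝ)^2-1))/4 := by
    intro v
    have h1 : ∀ w : Fin n, ((SimpleGraph.pathGraph n).dist v w : ℝ)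
        = (fun j => ((Nat.dist v.val j : ℕ):ℝ)) w.val := fun w => by rw [pg_dist]
    rw [Finset.sum_congr rfl (fun w _ => h1 w)]
    rw [Fin.sum_univ_eq_sum_range (fun j => ((Nat.dist v.val j : ℕ):ℝ)) n]
    exact sum_natDist_real n v.val v.isLt
  have h2 : ∀ v : Fin n, ((n:ℝ)-1) / ∑ w : Fin n, ((SimpleGraph.pathGraph n).dist v w : ℝ)
      = (fun j : ℕ => fpg n (j:ℝ)) v.val := by
    intro v
    simp only [fpg]
    rw [hv v, div_div_eq_mul_div]
    ring
  rw [Finset.sum_congr rfl (fun v _ => h2 v)]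
  rw [Fin.sum_univ_eq_sum_range (fun j : ℕ => fpg n (j:ℝ)) n]

end basic

/-- Asymptotically tight bounds on the closeness centrality of the path `P_n`. -/
theorem closenessCentrality_pathGraph_bounds (n : ℕ) (hn : 2 ≤ n) :
    (4 / (n : ℝ)) * Real.sqrt (((n : ℝ) - 1) / ((n : ℝ) + 1)) *
        Real.arctan (Real.sqrt (((n : ℝ) - 1) / ((n : ℝ) + 1))) ≤
      (1 / (n : ℝ)) *
        ∑ v : Fin n,
          ((n : ℝ) - 1) / ∑ w : Fin n, ((SimpleGraph.pathGraph n).dist v w : ℝ) ∧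
    (1 / (n : ℝ)) *
        ∑ v : Fin n,
          ((n : ℝ) - 1) / ∑ w : Fin n, ((SimpleGraph.pathGraph n).dist v w : ℝ) ≤
      (Real.pi / (n : ℝ)) * Real.sqrt (((n : ℝ) - 1) / ((n : ℝ) + 1)) +
        ((n : ℝ) - 1) / ((n : ℝ) * ((n / 2 : ℕ) : ℝ) * (((n + 1) / 2 : ℕ) : ℝ)) := by
  have hn0 : (0:ℝ) < n := by exact_mod_cast Nat.cast_pos.mpr (by omega : 0 < n)
  have h1 : (1:ℝ) ≤ n := by exact_mod_cast hn.trans' (by norm_num)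
  have hseq := closeness_sum_eq hn
  rw [hseq]
  have hint := fpg_integral_total hn
  set s := Real.sqrt (((n:ℝ)-1)/((n:ℝ)+1)) with hs
  constructor
  · calc (4/(n:ℝ))*s*Real.arctan s = (1/(n:ℝ))*(4*s*Real.arctan s) := by ring
      _ ≤ (1/(n:ℝ))*∑ k ∈ range n, fpg n (k:ℝ) := by
          apply mul_le_mul_of_nonneg_left _ (by positivity)
          rw [← hint]
          exact fpg_sum_ge hn
  · have hs1 : s ≤ 1 := Real.sqrt_le_one.mpr (by rw [div_le_one (by linarith)]; linarith)
    have hs0 : 0 ≤ s := Real.sqrt_nonneg _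
    have hat : Real.arctan s ≤ Real.pi/4 := by
      rw [← Real.arctan_one]
      exact Real.arctan_strictMono.monotone hs1
    calc (1/(n:ℝ))*∑ k ∈ range n, fpg n (k:ℝ)
        ≤ (1/(n:ℝ))*((∫ x in (0:ℝ)..((n:ℝ)-1), fpg n x) + fpg n (((n/2:ℕ)):ℝ)) :=
          mul_le_mul_of_nonneg_left (fpg_sum_le hn) (by positivity)
      _ = (1/(n:ℝ))*(4*s*Real.arctan s)
          + (1/(n:ℝ))*(((n:ℝ)-1)/(((n/2:ℕ):ℝ)*(((n+1)/2:ℕ):ℝ))) := by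
          rw [hint, fpg_half hn]; ring
      _ ≤ (Real.pi/(n:ℝ))*s + ((n:ℝ)-1)/((n:ℝ)*((n/2:ℕ):ℝ)*(((n+1)/2:ℕ):ℝ)) := by
          have key : 0 ≤ (s/(n:ℝ))*(Real.pi - 4*Real.arctan s) :=
            mul_nonneg (by positivity) (by linarith)
          have e : (1/(n:ℝ))*(((n:ℝ)-1)/(((n/2:ℕ):ℝ)*(((n+1)/2:ℕ):ℝ)))
              = ((n:ℝ)-1)/((n:ℝ)*((n/2:ℕ):ℝ)*(((n+1)/2:ℕ):ℝ)) := by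
            rw [div_mul_div_comm, one_mul, mul_assoc]
          rw [e]
          have h2 : (1/(n:ℝ))*(4*s*Real.arctan s) ≤ (Real.pi/(n:ℝ))*s := by
            have hr : (1/(n:ℝ))*(4*s*Real.arctan s)
                = (Real.pi/(n:ℝ))*s - (s/(n:ℝ))*(Real.pi - 4*Real.arctan s) := by ring
            linarith [key, hr]
          linarith
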